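/- For a ring R and n > 1, the matrix ring M_n(R) is VNL if and only if R is von Neumann regular. -/

import Mathlib

/-- An element `a` of a ring is (von Neumann) regular if `a = a * x * a` for some `x`. -/
def IsVNRegular {R : Type*} [Ring R] (a : R) : Prop := ∃ x : R, a = a * x * a

/-- A ring is VNL if for every `a`, either `a` or `1 - a` is regular. -/
def IsVNLRing (R : Type*) [Ring R] : Prop :=
  ∀ a : R, IsVNRegular a ∨ IsVNRegular (1 - a)

section Aux

variable {R : Type*} [Ring R]

/-- Over a von Neumann regular ring, every row vector `r` admits a column `x`
with `(r ⬝ x) * r = r`. -/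
private lemma row_regular (hR : ∀ a : R, IsVNRegular a) :
    ∀ (m : ℕ) (r : Fin m → R), ∃ x : Fin m → R, ∀ j, (∑ i, r i * x i) * r j = r j := by
  intro m
  induction m with
  | zero => exact fun r => ⟨0, fun j => j.elim0⟩
  | succ m ih =>
    intro r
    obtain ⟨a', ha'⟩ := hR (r 0)
    set a : R := r 0 with ha
    set b : Fin m → R := fun i => r i.succ with hb
    set b₁ : Fin m → R := fun i => b i - a * a' * b i with hb₁
    obtain ⟨x₁, hx₁⟩ := ih b₁
    set x₁' : Fin m → R := fun i => x₁ i - x₁ i * (a * a') with hx₁'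
    have haa : a * a' * a = a := ha'.symm
    have F1 : ∀ j, a * a' * b₁ j = 0 := by
      intro j
      have : a * a' * (a * a' * b j) = a * a' * b j := by
        calc a * a' * (a * a' * b j) = (a * a' * a) * (a' * b j) := by
              simp [mul_assoc]
          _ = a * a' * b j := by rw [haa, mul_assoc]
      simp only [hb₁, mul_sub, this, sub_self]
    have F2 : ∀ j, x₁' j * a = 0 := by
      intro j
      simp only [hx₁', sub_mul, mul_assoc, haa]
      exact sub_self _
    set s₁ : R := ∑ i, b₁ i * x₁ i with hs₁def
    set s₁' : R := ∑ i, b₁ i * x₁' i with hs₁'def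
    have hs₁' : s₁' = s₁ - s₁ * (a * a') := by
      simp only [hs₁'def, hs₁def, hx₁', mul_sub, Finset.sum_sub_distrib, Finset.sum_mul,
        mul_assoc]
    have F3 : ∀ j, s₁' * b₁ j = b₁ j := by
      intro j
      rw [hs₁', sub_mul, hx₁ j, mul_assoc, F1 j, mul_zero, sub_zero]
    have F4 : s₁' * a = 0 := by
      rw [hs₁'def, Finset.sum_mul]
      refine Finset.sum_eq_zero fun i _ => ?_
      rw [mul_assoc, F2 i, mul_zero]
    set a'' : R := a' - a' * s₁' with ha''
    have F5 : a * a'' * a = a := by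
      rw [ha'', mul_sub, sub_mul, haa, mul_assoc, mul_assoc, F4, mul_zero, mul_zero, sub_zero]
    have F6 : ∀ j, a'' * b₁ j = 0 := by
      intro j
      rw [ha'', sub_mul, mul_assoc, F3 j, sub_self]
    set e : R := a * a'' + s₁' with he
    have F7 : e * a = a := by rw [he, add_mul, F5, F4, add_zero]
    have F8 : ∀ j, e * b₁ j = b₁ j := by
      intro j
      rw [he, add_mul, mul_assoc, F6 j, mul_zero, zero_add, F3 j]
    have F9 : ∀ j, e * b j = b j := by
      intro j
      have hbj : b j = b₁ j + a * a' * b j := by simp [hb₁]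
      conv_lhs => rw [hbj]
      rw [mul_add, show e * (a * a' * b j) = e * a * (a' * b j) by
        simp [mul_assoc], F7, F8 j, ← mul_assoc]
      exact hbj.symm
    refine ⟨Fin.cons (α := fun _ => R) (a'' - ∑ i, a' * b i * x₁' i) x₁', ?_⟩
    have hsum : (∑ i : Fin (m + 1),
        r i * Fin.cons (α := fun _ => R) (a'' - ∑ i, a' * b i * x₁' i) x₁' i) = e := by
      rw [Fin.sum_univ_succ]
      simp only [Fin.cons_zero, Fin.cons_succ, ← ha, ← hb]
      have h1 : a * (a'' - ∑ i, a' * b i * x₁' i)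
          = a * a'' - ∑ i, a * a' * b i * x₁' i := by
        rw [mul_sub, Finset.mul_sum]
        simp [mul_assoc]
      have h2 : (∑ i, b i * x₁' i) = s₁' + ∑ i, a * a' * b i * x₁' i := by
        rw [hs₁'def, ← Finset.sum_add_distrib]
        refine Finset.sum_congr rfl fun i _ => ?_
        rw [← add_mul]
        congr 1
        simp [hb₁]
      rw [h1, h2, he]
      abel
    rw [hsum]
    intro j
    refine Fin.cases ?_ ?_ j
    · rw [← ha]; exact F7
    · intro i
      have : r i.succ = b i := by rw [hb]
      rw [this]; exact F9 i

variable {n : ℕ}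

private lemma matrix_regular (hR : ∀ a : R, IsVNRegular a)
    (B : Matrix (Fin n) (Fin n) R) : IsVNRegular B := by
  classical
  -- by induction on k, the "first k rows" submatrix of B has the same row space as an
  -- idempotent matrix
  have key : ∀ k : ℕ, ∃ E P Q : Matrix (Fin n) (Fin n) R,
      E * E = E ∧ E = P * B ∧
      (Matrix.of fun (i j : Fin n) => if (i : ℕ) < k then B i j else 0) = Q * E := by
    intro k
    induction k with
    | zero =>
      refine ⟨0, 0, 0, by simp, by simp, ?_⟩
      ext i j
      simp [Matrix.mul_apply]
    | succ k ihk =>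
      obtain ⟨E, P, Q, hE, hEP, hQ⟩ := ihk
      by_cases hk : k < n
      · set κ : Fin n := ⟨k, hk⟩ with hκ
        set r : Fin n → R := fun j => B κ j with hr
        set r₁ : Fin n → R := r - Matrix.vecMul r E with hr₁
        have hr₁E : Matrix.vecMul r₁ E = 0 := by
          rw [hr₁, Matrix.sub_vecMul, Matrix.vecMul_vecMul, hE, sub_self]
        obtain ⟨x, hx⟩ := row_regular hR n r₁
        set G : Matrix (Fin n) (Fin n) R := Matrix.of fun i j => x i * r₁ j with hG
        have hGE : G * E = 0 := by
          ext i j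
          simp only [Matrix.mul_apply, hG, Matrix.of_apply, Matrix.zero_apply, mul_assoc,
            ← Finset.mul_sum]
          have : (∑ t, r₁ t * E t j) = Matrix.vecMul r₁ E j := by
            simp [Matrix.vecMul, dotProduct]
          rw [this, hr₁E]
          simp
        have hGG : G * G = G := by
          ext i j
          simp only [Matrix.mul_apply, hG, Matrix.of_apply]
          calc (∑ t, x i * r₁ t * (x t * r₁ j))
              = x i * ((∑ t, r₁ t * x t) * r₁ j) := by
                rw [Finset.sum_mul, Finset.mul_sum]
                refine Finset.sum_congr rfl fun t _ => by simp [mul_assoc]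
            _ = x i * r₁ j := by rw [hx j]
        set H : Matrix (Fin n) (Fin n) R := E + G - E * G with hH
        have hEH : E * H = E := by
          rw [hH, mul_sub, mul_add, ← mul_assoc, hE]
          abel
        have hGH : G * H = G := by
          rw [hH, mul_sub, mul_add, hGG, ← mul_assoc, hGE, zero_mul]
          simp
        have hHH : H * H = H := by
          conv_lhs => rw [hH]
          rw [sub_mul, add_mul, hEH, hGH, mul_assoc, hGH, hH]
        -- H = P' * B
        set Xm : Matrix (Fin n) (Fin n) R :=
          Matrix.of fun i j => if j = κ then x i else 0 with hXm
        have hXmB : Xm * B = Matrix.of fun i j => x i * r j := by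
          ext i j
          simp only [Matrix.mul_apply, hXm, Matrix.of_apply, ite_mul, zero_mul]
          rw [Finset.sum_ite_eq' Finset.univ κ fun t => x i * B t j]
          simp [hr]
        have hGrE : (Matrix.of fun (i j : Fin n) => x i * r j) * E
            = Matrix.of fun (i j : Fin n) => x i * Matrix.vecMul r E j := by
          ext i j
          simp only [Matrix.mul_apply, Matrix.of_apply, mul_assoc, ← Finset.mul_sum]
          congr 1
        have hGform : G = Xm * B - Xm * B * E := by
          rw [hXmB, hGrE]
          ext i j
          simp only [hG, Matrix.sub_apply, Matrix.of_apply]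
          have hrj : r₁ j = r j - Matrix.vecMul r E j := by rw [hr₁]; rfl
          rw [hrj, mul_sub]
        set P' : Matrix (Fin n) (Fin n) R := P + (1 - E) * (Xm - Xm * B * P) with hP'
        have hP'B : H = P' * B := by
          have h1 : (Xm - Xm * B * P) * B = G := by
            rw [sub_mul, mul_assoc, ← hEP, ← hGform]
          rw [hP', add_mul, mul_assoc, h1, ← hEP, hH, sub_mul, one_mul]
          abel
        -- B_{k+1} = Q' * H
        set Δ : Matrix (Fin n) (Fin n) R :=
          Matrix.of fun i j => if i = κ then r j else 0 with hΔ
        set Δ₁ : Matrix (Fin n) (Fin n) R :=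
          Matrix.of fun i j => if i = κ then r₁ j else 0 with hΔ₁
        have hΔE : Δ * E = Matrix.of fun i j => if i = κ then Matrix.vecMul r E j else 0 := by
          ext i j
          simp only [Matrix.mul_apply, hΔ, Matrix.of_apply, ite_mul, zero_mul]
          by_cases h : i = κ
          · simp only [h, if_true]
            simp [Matrix.vecMul, dotProduct]
          · simp [h]
        have hsplit : Δ = Δ * E + Δ₁ := by
          rw [hΔE]
          ext i j
          simp only [hΔ, hΔ₁, Matrix.add_apply, Matrix.of_apply]
          by_cases h : i = κ
          · simp only [h, if_true, hr₁]
            simp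
          · simp [h]
        have hΔ₁G : Δ₁ * G = Δ₁ := by
          ext i j
          simp only [Matrix.mul_apply, hΔ₁, hG, Matrix.of_apply, ite_mul, zero_mul]
          by_cases h : i = κ
          · simp only [h, if_true]
            calc (∑ t, r₁ t * (x t * r₁ j)) = (∑ t, r₁ t * x t) * r₁ j := by
                  rw [Finset.sum_mul]
                  exact Finset.sum_congr rfl fun t _ => (mul_assoc _ _ _).symm
              _ = r₁ j := hx j
          · simp [h]
        have hΔ₁E : Δ₁ * E = 0 := by
          ext i j
          simp only [Matrix.mul_apply, hΔ₁, Matrix.of_apply, ite_mul, zero_mul,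
            Matrix.zero_apply]
          by_cases h : i = κ
          · simp only [h, if_true]
            have : (∑ t, r₁ t * E t j) = Matrix.vecMul r₁ E j := by
              simp [Matrix.vecMul, dotProduct]
            rw [this, hr₁E]
            simp
          · simp [h]
        have hΔ₁H : Δ₁ * H = Δ₁ := by
          rw [hH, mul_sub, mul_add, hΔ₁E, ← mul_assoc, hΔ₁E, zero_mul, zero_add,
            sub_zero, hΔ₁G]
        have hBsplit : (Matrix.of fun (i j : Fin n) => if (i : ℕ) < k + 1 then B i j else 0)
            = (Matrix.of fun (i j : Fin n) => if (i : ℕ) < k then B i j else 0) + Δ := by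
          ext i j
          simp only [Matrix.add_apply, Matrix.of_apply, hΔ]
          have hiκ : (i = κ) ↔ ((i : ℕ) = k) := by
            constructor
            · intro h; rw [h]
            · intro h; exact Fin.ext h
          rcases lt_trichotomy (i : ℕ) k with h | h | h
          · have h1 : (i : ℕ) < k + 1 := by omega
            have h2 : ¬ i = κ := by rw [hiκ]; omega
            simp [h, h1, h2]
          · have h1 : (i : ℕ) < k + 1 := by omega
            have h2 : i = κ := hiκ.mpr h
            have h3 : ¬ (i : ℕ) < k := by omega
            subst h2
            simp [h1, h3, hr]
          · have h1 : ¬ (i : ℕ) < k + 1 := by omega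
            have h2 : ¬ i = κ := by rw [hiκ]; omega
            have h3 : ¬ (i : ℕ) < k := by omega
            simp [h1, h2, h3]
        refine ⟨H, P', Q * E + Δ * E + Δ₁, hHH, hP'B, ?_⟩
        calc (Matrix.of fun (i j : Fin n) => if (i : ℕ) < k + 1 then B i j else 0)
              = (Q * E) + Δ := by rw [hBsplit, hQ]
          _ = (Q * E) + (Δ * E + Δ₁) := by conv_lhs => rw [hsplit]
          _ = (Q * E + Δ * E + Δ₁) * H := by
              rw [add_mul, add_mul, mul_assoc, hEH, mul_assoc, hEH, hΔ₁H, add_assoc]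
              try abel
      · -- k ≥ n : nothing changes
        refine ⟨E, P, Q, hE, hEP, ?_⟩
        rw [← hQ]
        ext i j
        have h1 : (i : ℕ) < k := lt_of_lt_of_le i.isLt (by omega)
        have h2 : (i : ℕ) < k + 1 := by omega
        simp [h1, h2]
        intro h3; omega
  obtain ⟨E, P, Q, hE, hEP, hQ⟩ := key n
  have hBn : (Matrix.of fun (i j : Fin n) => if (i : ℕ) < n then B i j else 0) = B := by
    ext i j
    simp [i.isLt]
  rw [hBn] at hQ
  refine ⟨P, ?_⟩
  calc B = Q * E := hQ
    _ = Q * (E * (P * B)) := by rw [← hEP, hE]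
    _ = (Q * E) * P * B := by rw [← mul_assoc, ← mul_assoc]
    _ = B * P * B := by rw [← hQ]

end Aux

/-- For `n > 1`, the matrix ring `Mₙ(R)` is VNL iff `R` is von Neumann regular. -/
theorem matrix_isVNL_iff_regular {R : Type*} [Ring R] {n : ℕ} (hn : 1 < n) :
    IsVNLRing (Matrix (Fin n) (Fin n) R) ↔ ∀ a : R, IsVNRegular a := by
  constructor
  · intro h a
    classical
    have h0 : 0 < n := by omega
    set i0 : Fin n := ⟨0, h0⟩ with hi0
    set i1 : Fin n := ⟨1, hn⟩ with hi1
    set d : Fin n → R := fun i => if i = i0 then a else if i = i1 then 1 - a else 1 with hd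
    set A : Matrix (Fin n) (Fin n) R := Matrix.diagonal d with hA
    rcases h A with ⟨X, hX⟩ | ⟨X, hX⟩
    · have h00 := congrFun (congrFun hX i0) i0
      rw [hA, Matrix.mul_assoc, Matrix.diagonal_mul, Matrix.mul_diagonal] at h00
      simp only [Matrix.diagonal_apply_eq] at h00
      have hd0 : d i0 = a := by simp [hd]
      rw [hd0] at h00
      exact ⟨X i0 i0, by rw [mul_assoc]; exact h00⟩
    · have h1A : (1 : Matrix (Fin n) (Fin n) R) - A = Matrix.diagonal (fun i => 1 - d i) := by
        rw [hA, ← Matrix.diagonal_one, Matrix.diagonal_sub]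
      rw [h1A] at hX
      have h11 := congrFun (congrFun hX i1) i1
      rw [Matrix.mul_assoc, Matrix.diagonal_mul, Matrix.mul_diagonal] at h11
      simp only [Matrix.diagonal_apply_eq] at h11
      have hd1 : 1 - d i1 = a := by
        have hne : ¬ i1 = i0 := by
          intro hc
          have := congrArg Fin.val hc
          simp [hi1, hi0] at this
        simp [hd, hne]
      rw [hd1] at h11
      exact ⟨X i1 i1, by rw [mul_assoc]; exact h11⟩
  · intro hR A
    exact Or.inl (matrix_regular hR A)
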